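/- Let Σ be a symmetric positive definite d×d real matrix, Σ_A a symmetric positive definite d×d matrix, z_A ∈ ℝ^d, and define w_* = Σ⁻¹z_A, w_A = Σ_A⁻¹z_A, and the gap matrix Δ = Σ^{-1/2}(Σ - Σ_A)Σ^{-1/2}. If the spectral norm ‖Δ‖₂ ≤ 1/2, then (w_* - w_A)ᵀ Σ (w_* - w_A) ≤ 4 ‖Δ‖₂² · (z_Aᵀ Σ⁻¹ z_A). -/

import Mathlib

open Matrix
open scoped Matrix.Norms.L2Operator

private lemma dot_self_eq_norm_sq {d : ℕ} (x : Fin d → ℝ) :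
    x ⬝ᵥ x = ‖(EuclideanSpace.equiv (Fin d) ℝ).symm x‖ ^ 2 := by
  rw [EuclideanSpace.norm_eq, Real.sq_sqrt (by positivity)]
  simp [dotProduct, sq, EuclideanSpace.equiv]

theorem stmt0 {d : ℕ} (Sig SigA : Matrix (Fin d) (Fin d) ℝ)
    (hSig : Sig.PosDef) (hSigA : SigA.PosDef) (z : Fin d → ℝ)
    (wstar wA : Fin d → ℝ)
    (hwstar : wstar = Sig⁻¹.mulVec z) (hwA : wA = SigA⁻¹.mulVec z)
    (Δ : Matrix (Fin d) (Fin d) ℝ)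
    (hΔdef : Δ = (hSig.posSemidef.1.eigenvectorUnitary.1 * diagonal ((↑) ∘ (√·) ∘ hSig.posSemidef.1.eigenvalues) *
        (star hSig.posSemidef.1.eigenvectorUnitary : Matrix (Fin d) (Fin d) ℝ))⁻¹ * (Sig - SigA) *
      (hSig.posSemidef.1.eigenvectorUnitary.1 * diagonal ((↑) ∘ (√·) ∘ hSig.posSemidef.1.eigenvalues) *
        (star hSig.posSemidef.1.eigenvectorUnitary : Matrix (Fin d) (Fin d) ℝ))⁻¹)
    (hΔ : ‖Δ‖ ≤ 1 / 2) :
    (wstar - wA) ⬝ᵥ Sig.mulVec (wstar - wA) ≤ 4 * ‖Δ‖ ^ 2 * (z ⬝ᵥ Sig⁻¹.mulVec z) := by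
  set S := (hSig.posSemidef.1.eigenvectorUnitary.1 * diagonal ((↑) ∘ (√·) ∘ hSig.posSemidef.1.eigenvalues) *
        (star hSig.posSemidef.1.eigenvectorUnitary : Matrix (Fin d) (Fin d) ℝ)) with hSdef
  have hSS : S * S = Sig := by
    have hU : (star hSig.posSemidef.1.eigenvectorUnitary : Matrix (Fin d) (Fin d) ℝ) *
        hSig.posSemidef.1.eigenvectorUnitary.1 = 1 := Unitary.coe_star_mul_self _
    have hDD : diagonal ((fun x : ℝ => x) ∘ (√·) ∘ hSig.posSemidef.1.eigenvalues) *
        diagonal ((fun x : ℝ => x) ∘ (√·) ∘ hSig.posSemidef.1.eigenvalues) =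
        diagonal (RCLike.ofReal ∘ hSig.posSemidef.1.eigenvalues) := by
      rw [diagonal_mul_diagonal]
      congr 1
      funext i
      simp [Real.mul_self_sqrt (hSig.posSemidef.eigenvalues_nonneg i)]
    conv_rhs => rw [hSig.posSemidef.1.spectral_theorem, Unitary.conjStarAlgAut_apply]
    rw [hSdef, ← hDD]
    simp only [Matrix.mul_assoc]
    rw [← Matrix.mul_assoc _ (hSig.posSemidef.1.eigenvectorUnitary.1), hU, Matrix.one_mul]
  have hSsymm : Sᵀ = S := by
    rw [hSdef]
    simp [Matrix.transpose_mul, Matrix.mul_assoc, Matrix.star_eq_conjTranspose]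
  have hdetSig : IsUnit Sig.det := (Matrix.isUnit_iff_isUnit_det _).mp hSig.isUnit
  have hdetS : IsUnit S.det := by
    have h : S.det * S.det = Sig.det := by rw [← Matrix.det_mul, hSS]
    exact isUnit_of_mul_isUnit_left (h ▸ hdetSig)
  have hdetSA : IsUnit SigA.det := (Matrix.isUnit_iff_isUnit_det _).mp hSigA.isUnit
  have hSinv : S⁻¹ * S = 1 := Matrix.nonsing_inv_mul S hdetS
  have hSinv' : S * S⁻¹ = 1 := Matrix.mul_nonsing_inv S hdetS
  have hAinv : SigA⁻¹ * SigA = 1 := Matrix.nonsing_inv_mul _ hdetSA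
  have hSiginv : Sig⁻¹ = S⁻¹ * S⁻¹ := by rw [← hSS, Matrix.mul_inv_rev]
  have c1 : ∀ X : Matrix (Fin d) (Fin d) ℝ, S * (S⁻¹ * X) = X := fun X => by
    rw [← Matrix.mul_assoc, hSinv', Matrix.one_mul]
  have c1' : ∀ X : Matrix (Fin d) (Fin d) ℝ, S⁻¹ * (S * X) = X := fun X => by
    rw [← Matrix.mul_assoc, hSinv, Matrix.one_mul]
  have c2 : ∀ X : Matrix (Fin d) (Fin d) ℝ, SigA⁻¹ * (SigA * X) = X := fun X => by
    rw [← Matrix.mul_assoc, hAinv, Matrix.one_mul]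
  have h1Δ : 1 - Δ = S⁻¹ * SigA * S⁻¹ := by
    have e1 : S⁻¹ * Sig * S⁻¹ = 1 := by
      rw [← hSS, ← Matrix.mul_assoc, hSinv, Matrix.one_mul, hSinv']
    rw [hΔdef, Matrix.mul_sub, Matrix.sub_mul, e1]
    abel
  set N := S * SigA⁻¹ * S with hNdef
  have hN1 : N * (1 - Δ) = 1 := by
    rw [h1Δ, hNdef]
    simp only [Matrix.mul_assoc]
    rw [c1 (SigA * S⁻¹), c2 S⁻¹, hSinv']
  have hNΔ : N * Δ = N - 1 := by
    have h := hN1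
    rw [Matrix.mul_sub, Matrix.mul_one] at h
    rw [eq_sub_iff_add_eq, add_comm, ← eq_sub_iff_add_eq, h]
  have hone : ‖(1 : Matrix (Fin d) (Fin d) ℝ)‖ ≤ 1 := by
    rw [Matrix.cstar_norm_def, _root_.map_one, ContinuousLinearMap.one_def]
    exact ContinuousLinearMap.norm_id_le
  have hNnorm : ‖N‖ ≤ 2 := by
    have h1 : ‖N‖ = ‖1 + N * Δ‖ :=
      congrArg norm (show N = 1 + N * Δ by rw [hNΔ]; abel)
    have h2 : ‖1 + N * Δ‖ ≤ ‖(1 : Matrix (Fin d) (Fin d) ℝ)‖ + ‖N‖ * ‖Δ‖ :=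
      le_trans (norm_add_le _ _) (by gcongr; exact norm_mul_le _ _)
    have h3 : ‖N‖ * ‖Δ‖ ≤ ‖N‖ * (1 / 2) := by gcongr
    nlinarith [norm_nonneg N]
  set B := S * (Sig⁻¹ - SigA⁻¹) * S with hBdef
  have hB : B = 1 - N := by
    have e2 : S * Sig⁻¹ * S = 1 := by
      rw [hSiginv, ← Matrix.mul_assoc S S⁻¹ S⁻¹, hSinv', Matrix.one_mul, hSinv]
    rw [hBdef, Matrix.mul_sub, Matrix.sub_mul, e2, hNdef]
  have hBnorm : ‖B‖ ≤ 2 * ‖Δ‖ := by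
    have : ‖B‖ = ‖N * Δ‖ := by rw [hB, hNΔ, norm_sub_rev]
    calc ‖B‖ = ‖N * Δ‖ := this
      _ ≤ ‖N‖ * ‖Δ‖ := norm_mul_le _ _
      _ ≤ 2 * ‖Δ‖ := by gcongr
  -- vector part
  set v := wstar - wA with hvdef
  have hv : v = (Sig⁻¹ - SigA⁻¹).mulVec z := by
    rw [hvdef, hwstar, hwA, Matrix.sub_mulVec]
  have e3 : S * (Sig⁻¹ - SigA⁻¹) = B * S⁻¹ := by
    rw [hBdef, Matrix.mul_assoc (S * (Sig⁻¹ - SigA⁻¹)) S S⁻¹, hSinv', Matrix.mul_one]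
  have hSv : S.mulVec v = B.mulVec (S⁻¹.mulVec z) := by
    rw [hv, Matrix.mulVec_mulVec, Matrix.mulVec_mulVec, e3]
  have hLHS : v ⬝ᵥ Sig.mulVec v = (S.mulVec v) ⬝ᵥ (S.mulVec v) := by
    rw [← hSS, ← Matrix.mulVec_mulVec, Matrix.dotProduct_mulVec, ← hSsymm,
      Matrix.vecMul_transpose, hSsymm]
  have hRHS : z ⬝ᵥ Sig⁻¹.mulVec z = (S⁻¹.mulVec z) ⬝ᵥ (S⁻¹.mulVec z) := by
    have hSinvsymm : (S⁻¹)ᵀ = S⁻¹ := by rw [Matrix.transpose_nonsing_inv, hSsymm]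
    rw [hSiginv, ← Matrix.mulVec_mulVec, Matrix.dotProduct_mulVec, ← hSinvsymm,
      Matrix.vecMul_transpose, hSinvsymm]
  set u : EuclideanSpace ℝ (Fin d) := (EuclideanSpace.equiv (Fin d) ℝ).symm (S⁻¹.mulVec z)
    with hudef
  have key : ‖(EuclideanSpace.equiv (Fin d) ℝ).symm (B.mulVec (S⁻¹.mulVec z))‖ ≤
      2 * ‖Δ‖ * ‖u‖ := by
    calc ‖(EuclideanSpace.equiv (Fin d) ℝ).symm (B.mulVec (S⁻¹.mulVec z))‖
        ≤ ‖B‖ * ‖u‖ := Matrix.l2_opNorm_mulVec B u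
      _ ≤ 2 * ‖Δ‖ * ‖u‖ := by gcongr
  rw [hLHS, hRHS, hSv, dot_self_eq_norm_sq, dot_self_eq_norm_sq]
  have hu : ‖(EuclideanSpace.equiv (Fin d) ℝ).symm (S⁻¹.mulVec z)‖ = ‖u‖ := rfl
  rw [hu]
  calc ‖(EuclideanSpace.equiv (Fin d) ℝ).symm (B.mulVec (S⁻¹.mulVec z))‖ ^ 2
      ≤ (2 * ‖Δ‖ * ‖u‖) ^ 2 := by
        apply sq_le_sq' _ key
        have := norm_nonneg ((EuclideanSpace.equiv (Fin d) ℝ).symm (B.mulVec (S⁻¹.mulVec z)))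
        nlinarith [norm_nonneg Δ, norm_nonneg u]
    _ = 4 * ‖Δ‖ ^ 2 * ‖u‖ ^ 2 := by ring
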